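/- For every finite poset P with n elements, every pair of integers t ≥ s ≥ 2: the local t-dimension of P is at most ⌈log_t n⌉ times the local dimension of P, and the local t-dimension of P is at most ⌈log_t s⌉ times the local s-dimension of P. -/

import Mathlib

open Classical Finset Real
open scoped Classical

noncomputable section

/-- A monotone partial function from `P` to the `t`-element chain,
encoded as a function into `Option (Fin t)` (`none` = outside the domain). -/
def MonotonePartial {P : Type*} [PartialOrder P] {t : ℕ} (f : P → Option (Fin t)) : Prop :=
  ∀ ⦃x y : P⦄, x ≤ y → ∀ ⦃a b : Fin t⦄, f x = some a → f y = some b → a ≤ b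

/-- `f` separates the pair `(x, y)`: both are in the domain and `f x < f y`. -/
def Separates {P : Type*} {t : ℕ} (f : P → Option (Fin t)) (x y : P) : Prop :=
  ∃ a b : Fin t, f x = some a ∧ f y = some b ∧ a < b

/-- A local `t`-realiser: a set of monotone partial functions into the `t`-chain
separating every pair `x ≱ y`. -/
def IsLocalRealiser {P : Type*} [PartialOrder P] {t : ℕ}
    (L : Finset (P → Option (Fin t))) : Prop :=
  (∀ f ∈ L, MonotonePartial f) ∧ ∀ x y : P, ¬ y ≤ x → ∃ f ∈ L, Separates f x y

/-- The multiplicity of `x` in `L`: the number of members of `L` whose domain contains `x`. -/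
def mult {P : Type*} {t : ℕ} (L : Finset (P → Option (Fin t))) (x : P) : ℕ :=
  (L.filter fun f => (f x).isSome).card

/-- The local `t`-dimension: minimal possible maximum multiplicity of a local `t`-realiser. -/
def ltdim (t : ℕ) (P : Type*) [PartialOrder P] : ℕ :=
  sInf {d | ∃ L : Finset (P → Option (Fin t)), IsLocalRealiser L ∧ ∀ x, mult L x ≤ d}

/-- Local dimension: like local `t`-dimension but with partial functions into an
arbitrary chain; for finite posets the chain may be taken to be `ℕ`. -/
def MonotonePartialNat {P : Type*} [PartialOrder P] (f : P → Option ℕ) : Prop :=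
  ∀ ⦃x y : P⦄, x ≤ y → ∀ ⦃a b : ℕ⦄, f x = some a → f y = some b → a ≤ b

def ldim (P : Type*) [PartialOrder P] : ℕ :=
  sInf {d | ∃ L : Finset (P → Option ℕ),
    ((∀ f ∈ L, MonotonePartialNat f) ∧
      ∀ x y : P, ¬ y ≤ x → ∃ f ∈ L, ∃ a b : ℕ, f x = some a ∧ f y = some b ∧ a < b) ∧
    ∀ x : P, (L.filter fun f => (f x).isSome).card ≤ d}

/- ### auxiliary arithmetic -/

lemma mod_le_of_div_eq {t a b : ℕ} (hab : a ≤ b) (h : a / t = b / t) :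
    a % t ≤ b % t := by
  have h1 := Nat.div_add_mod a t
  have h2 := Nat.div_add_mod b t
  rw [h] at h1
  omega

lemma mod_lt_of_div_eq {t a b : ℕ} (hab : a < b) (h : a / t = b / t) :
    a % t < b % t := by
  have h1 := Nat.div_add_mod a t
  have h2 := Nat.div_add_mod b t
  rw [h] at h1
  omega

/-- the key chain-separation lemma: highest differing base-`t` digit. -/
lemma digit_sep {t k a b : ℕ} (ht : 2 ≤ t) (hab : a < b) (hb : b < t ^ k) :
    ∃ i < k, a / t ^ (i + 1) = b / t ^ (i + 1) ∧ a / t ^ i % t < b / t ^ i % t := by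
  have hk : 1 ≤ k := by
    rcases k with _ | k
    · simp at hb; omega
    · omega
  have hex : ∃ i, a / t ^ (i + 1) = b / t ^ (i + 1) := by
    refine ⟨k, ?_⟩
    have h1 : a < t ^ (k + 1) := lt_of_lt_of_le (hab.trans hb) (Nat.pow_le_pow_right (by omega) (by omega))
    have h2 : b < t ^ (k + 1) := lt_of_lt_of_le hb (Nat.pow_le_pow_right (by omega) (by omega))
    rw [Nat.div_eq_of_lt h1, Nat.div_eq_of_lt h2]
  classical
  let i := Nat.find hex
  have hi : a / t ^ (i + 1) = b / t ^ (i + 1) := Nat.find_spec hex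
  have hik : i < k := by
    have : i ≤ k - 1 := Nat.find_le (by
      have h1 : a < t ^ (k - 1 + 1) := by
        have : k - 1 + 1 = k := by omega
        rw [this]; exact hab.trans hb
      have h2 : b < t ^ (k - 1 + 1) := by
        have : k - 1 + 1 = k := by omega
        rw [this]; exact hb
      rw [Nat.div_eq_of_lt h1, Nat.div_eq_of_lt h2])
    omega
  refine ⟨i, hik, hi, ?_⟩
  have hdiv : a / t ^ i / t = b / t ^ i / t := by
    rwa [Nat.div_div_eq_div_mul, Nat.div_div_eq_div_mul, ← pow_succ]
  have hle : a / t ^ i ≤ b / t ^ i := Nat.div_le_div_right hab.le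
  have hne : a / t ^ i ≠ b / t ^ i := by
    rcases Nat.eq_zero_or_pos i with h0 | h0
    · rw [h0]; simpa using hab.ne
    · have := Nat.find_min hex (m := i - 1) (by omega)
      have hii : i - 1 + 1 = i := by omega
      rw [hii] at this
      exact this
  exact mod_lt_of_div_eq (lt_of_le_of_ne hle hne) hdiv

/- ### digit partial functions -/

def hfun (t i p : ℕ) : ℕ → Option (Fin t) := fun v =>
  if h : 0 < t ∧ v / t ^ (i + 1) = p then some ⟨v / t ^ i % t, Nat.mod_lt _ h.1⟩ else none

lemma hfun_eq_some {t i p v : ℕ} {a : Fin t} :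
    hfun t i p v = some a ↔ v / t ^ (i + 1) = p ∧ (a : ℕ) = v / t ^ i % t := by
  unfold hfun
  split_ifs with h
  · simp only [Option.some_inj]
    constructor
    · rintro rfl; exact ⟨h.2, rfl⟩
    · rintro ⟨_, hv⟩; exact Fin.ext hv.symm
  · simp only [false_iff, reduceCtorEq, false_iff]
    rintro ⟨hp, _⟩
    exact h ⟨a.pos, hp⟩

lemma hfun_some {t i p v : ℕ} (ht : 0 < t) (hp : v / t ^ (i + 1) = p) :
    hfun t i p v = some ⟨v / t ^ i % t, Nat.mod_lt _ ht⟩ := by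
  unfold hfun; rw [dif_pos ⟨ht, hp⟩]

lemma mono_comp {P : Type*} [PartialOrder P] {f : P → Option ℕ}
    (hf : MonotonePartialNat f) (t i p : ℕ) :
    MonotonePartial (fun x => (f x).bind (hfun t i p)) := by
  intro x y hxy a b hx hy
  rw [Option.bind_eq_some_iff] at hx hy
  obtain ⟨u, hu, hau⟩ := hx
  obtain ⟨w, hw, hbw⟩ := hy
  rw [hfun_eq_some] at hau hbw
  obtain ⟨hup, ha⟩ := hau
  obtain ⟨hwp, hb⟩ := hbw
  have hdiv : u / t ^ i / t = w / t ^ i / t := by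
    rw [Nat.div_div_eq_div_mul, Nat.div_div_eq_div_mul, ← pow_succ, hup, hwp]
  rw [Fin.le_def, ha, hb]
  exact mod_le_of_div_eq (Nat.div_le_div_right (hf hxy hu hw)) hdiv

lemma ltdim_le_of_bounded {P : Type*} [PartialOrder P] {t k d : ℕ} (ht : 2 ≤ t)
    (L : Finset (P → Option ℕ))
    (hmono : ∀ f ∈ L, MonotonePartialNat f)
    (hsep : ∀ x y : P, ¬ y ≤ x → ∃ f ∈ L, ∃ a b : ℕ, f x = some a ∧ f y = some b ∧ a < b)
    (hbd : ∀ f ∈ L, ∀ x v, f x = some v → v < t ^ k)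
    (hmult : ∀ x, (L.filter fun f => (f x).isSome).card ≤ d) :
    ltdim t P ≤ k * d := by
  classical
  have ht0 : 0 < t := by omega
  set C := fun (f : P → Option ℕ) (i p : ℕ) => (fun x => (f x).bind (hfun t i p)) with hC
  set L' : Finset (P → Option (Fin t)) :=
    L.biUnion (fun f => (Finset.range k ×ˢ Finset.range (t ^ k)).image fun ip => C f ip.1 ip.2)
    with hL'
  apply Nat.sInf_le
  refine ⟨L', ⟨?_, ?_⟩, ?_⟩
  · intro g hg
    simp only [hL', Finset.mem_biUnion, Finset.mem_image] at hg
    obtain ⟨f, hf, ⟨ip, _, rfl⟩⟩ := hg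
    exact mono_comp (hmono f hf) t ip.1 ip.2
  · intro x y hxy
    obtain ⟨f, hf, a, b, hxa, hyb, hab⟩ := hsep x y hxy
    obtain ⟨i, hik, hdiv, hdig⟩ := digit_sep ht hab (hbd f hf y b hyb)
    have hp : a / t ^ (i + 1) < t ^ k :=
      lt_of_le_of_lt (Nat.div_le_self _ _) (hbd f hf x a hxa)
    refine ⟨C f i (a / t ^ (i + 1)), ?_, ?_⟩
    · simp only [hL', Finset.mem_biUnion]
      exact ⟨f, hf, Finset.mem_image.mpr ⟨(i, a / t ^ (i + 1)), by
        simp [Finset.mem_product, hik, hp], rfl⟩⟩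
    · refine ⟨⟨a / t ^ i % t, Nat.mod_lt _ ht0⟩, ⟨b / t ^ i % t, Nat.mod_lt _ ht0⟩, ?_, ?_,
        Fin.mk_lt_mk.mpr hdig⟩
      · show (f x).bind (hfun t i (a / t ^ (i + 1))) = _
        rw [hxa, Option.bind_some, hfun_some ht0 rfl]
      · show (f y).bind (hfun t i (a / t ^ (i + 1))) = _
        rw [hyb, Option.bind_some, hfun_some ht0 hdiv.symm]
  · intro x
    show mult L' x ≤ k * d
    unfold mult
    have hsurj : Set.SurjOn
        (fun fi : (P → Option ℕ) × ℕ => C fi.1 fi.2 ((fi.1 x).getD 0 / t ^ (fi.2 + 1)))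
        (((L.filter fun f => (f x).isSome) ×ˢ Finset.range k : Finset _) : Set _)
        ((L'.filter fun g => (g x).isSome) : Set _) := by
      intro g hg
      simp only [Finset.coe_filter, Set.mem_setOf_eq] at hg
      obtain ⟨hgL', hgx⟩ := hg
      simp only [hL', Finset.mem_biUnion, Finset.mem_image] at hgL'
      obtain ⟨f, hf, ⟨i, p⟩, hip, rfl⟩ := hgL'
      obtain ⟨a, ha⟩ := Option.isSome_iff_exists.mp hgx
      have ha' : (f x).bind (hfun t i p) = some a := ha
      rw [Option.bind_eq_some_iff] at ha'
      obtain ⟨v, hv, hva⟩ := ha'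
      rw [hfun_eq_some] at hva
      simp only [Finset.mem_product, Finset.mem_range] at hip
      refine ⟨(f, i), ?_, ?_⟩
      · simp only [Finset.coe_product, Set.mem_prod, Finset.mem_coe, Finset.mem_filter,
          Finset.mem_range]
        exact ⟨⟨hf, by rw [hv]; rfl⟩, hip.1⟩
      · show C f i ((f x).getD 0 / t ^ (i + 1)) = C f i p
        rw [hv]
        simp only [Option.getD_some]
        rw [hva.1]
    calc (L'.filter fun g => (g x).isSome).card
        ≤ ((L.filter fun f => (f x).isSome) ×ˢ Finset.range k).card :=
          Finset.card_le_card_of_surjOn _ hsurj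
      _ = (L.filter fun f => (f x).isSome).card * k := by
          rw [Finset.card_product, Finset.card_range]
      _ ≤ d * k := Nat.mul_le_mul_right _ (hmult x)
      _ = k * d := Nat.mul_comm _ _

lemma exists_realiser_nat (P : Type*) [PartialOrder P] [Fintype P] :
    Set.Nonempty {d | ∃ L : Finset (P → Option ℕ),
      ((∀ f ∈ L, MonotonePartialNat f) ∧
        ∀ x y : P, ¬ y ≤ x → ∃ f ∈ L, ∃ a b : ℕ, f x = some a ∧ f y = some b ∧ a < b) ∧
      ∀ x : P, (L.filter fun f => (f x).isSome).card ≤ d} := by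
  classical
  set pf := fun (xy : P × P) (z : P) =>
    if z = xy.1 then some 0 else if z = xy.2 then some (1 : ℕ) else none with hpf
  set L₀ := (Finset.univ.filter fun xy : P × P => ¬ xy.2 ≤ xy.1).image pf with hL₀
  refine ⟨L₀.card, L₀, ⟨?_, ?_⟩, fun x => Finset.card_filter_le _ _⟩
  · intro f hf
    simp only [hL₀, Finset.mem_image, Finset.mem_filter] at hf
    obtain ⟨⟨x, y⟩, ⟨_, hxy⟩, rfl⟩ := hf
    intro u v huv a b hu hv
    have key : ∀ (w : P) (c : ℕ), pf (x, y) w = some c →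
        (w = x ∧ c = 0) ∨ (w = y ∧ c = 1) := by
      intro w c h
      simp only [hpf] at h
      split_ifs at h with h1 h2
      · exact Or.inl ⟨h1, (Option.some_inj.mp h).symm⟩
      · exact Or.inr ⟨h2, (Option.some_inj.mp h).symm⟩
    rcases key u a hu with ⟨rfl, ha⟩ | ⟨rfl, ha⟩ <;>
      rcases key v b hv with ⟨rfl, hb⟩ | ⟨rfl, hb⟩ <;>
      first
        | omega
        | exact absurd huv hxy
  · intro x y hxy
    have hne : y ≠ x := fun h => hxy (h ▸ le_refl x)
    refine ⟨pf (x, y), ?_, 0, 1, ?_, ?_, one_pos⟩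
    · exact Finset.mem_image.mpr ⟨(x, y), Finset.mem_filter.mpr ⟨Finset.mem_univ _, hxy⟩, rfl⟩
    · simp [hpf]
    · simp [hpf, hne]

lemma exists_realiser_fin (P : Type*) [PartialOrder P] [Fintype P] {s : ℕ} (hs : 2 ≤ s) :
    Set.Nonempty {d | ∃ L : Finset (P → Option (Fin s)), IsLocalRealiser L ∧ ∀ x, mult L x ≤ d} := by
  classical
  set pf := fun (xy : P × P) (z : P) =>
    if z = xy.1 then some (⟨0, by omega⟩ : Fin s)
    else if z = xy.2 then some (⟨1, by omega⟩ : Fin s) else none with hpf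
  set L₀ := (Finset.univ.filter fun xy : P × P => ¬ xy.2 ≤ xy.1).image pf with hL₀
  refine ⟨L₀.card, L₀, ⟨?_, ?_⟩, fun x => Finset.card_filter_le _ _⟩
  · intro f hf
    simp only [hL₀, Finset.mem_image, Finset.mem_filter] at hf
    obtain ⟨⟨x, y⟩, ⟨_, hxy⟩, rfl⟩ := hf
    intro u v huv a b hu hv
    have key : ∀ (w : P) (c : Fin s), pf (x, y) w = some c →
        (w = x ∧ (c : ℕ) = 0) ∨ (w = y ∧ (c : ℕ) = 1) := by
      intro w c h
      simp only [hpf] at h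
      split_ifs at h with h1 h2
      · exact Or.inl ⟨h1, by rw [← Option.some_inj.mp h]⟩
      · exact Or.inr ⟨h2, by rw [← Option.some_inj.mp h]⟩
    rcases key u a hu with ⟨rfl, ha⟩ | ⟨rfl, ha⟩ <;>
      rcases key v b hv with ⟨rfl, hb⟩ | ⟨rfl, hb⟩ <;>
      first
        | (rw [Fin.le_def]; omega)
        | exact absurd huv hxy
  · intro x y hxy
    have hne : y ≠ x := fun h => hxy (h ▸ le_refl x)
    refine ⟨pf (x, y), ?_, ⟨0, by omega⟩, ⟨1, by omega⟩, ?_, ?_, Fin.mk_lt_mk.mpr one_pos⟩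
    · exact Finset.mem_image.mpr ⟨(x, y), Finset.mem_filter.mpr ⟨Finset.mem_univ _, hxy⟩, rfl⟩
    · simp [hpf]
    · simp [hpf, hne]

/-- `ltdim_t P ≤ ⌈log_t n⌉ · ldim P` and `ltdim_t P ≤ ⌈log_t s⌉ · ltdim_s P`. -/
theorem ltdim_le_ldim (P : Type*) [PartialOrder P] [Fintype P]
    (s t : ℕ) (hs : 2 ≤ s) (hst : s ≤ t) :
    ltdim t P ≤ Nat.clog t (Fintype.card P) * ldim P ∧
    ltdim t P ≤ Nat.clog t s * ltdim s P := by
  classical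
  have ht : 2 ≤ t := hs.trans hst
  have ht1 : 1 < t := ht
  constructor
  · -- first inequality
    obtain ⟨L, ⟨hmono, hsep⟩, hmult⟩ :
        ∃ L : Finset (P → Option ℕ),
          ((∀ f ∈ L, MonotonePartialNat f) ∧
            ∀ x y : P, ¬ y ≤ x → ∃ f ∈ L, ∃ a b : ℕ, f x = some a ∧ f y = some b ∧ a < b) ∧
          ∀ x : P, (L.filter fun f => (f x).isSome).card ≤ ldim P :=
      Nat.sInf_mem (exists_realiser_nat P)
    set n := Fintype.card P with hn
    set T := fun f : P → Option ℕ => Finset.univ.image (fun x => (f x).getD 0) with hT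
    set rk := fun (f : P → Option ℕ) (v : ℕ) => ((T f).filter (fun w => w < v)).card with hrk
    set c := fun (f : P → Option ℕ) (x : P) => (f x).map (rk f) with hc
    have hmemT : ∀ f x a, f x = some a → a ∈ T f := by
      intro f x a h
      exact Finset.mem_image.mpr ⟨x, Finset.mem_univ x, by rw [h]; rfl⟩
    have hrkmono : ∀ f a b, a ≤ b → rk f a ≤ rk f b := by
      intro f a b hab
      apply Finset.card_le_card
      intro w hw
      simp only [Finset.mem_filter] at hw ⊢
      exact ⟨hw.1, lt_of_lt_of_le hw.2 hab⟩
    have hrkstrict : ∀ f a b, a ∈ T f → a < b → rk f a < rk f b := by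
      intro f a b haT hab
      apply Finset.card_lt_card
      constructor
      · intro w hw
        simp only [Finset.mem_filter] at hw ⊢
        exact ⟨hw.1, hw.2.trans hab⟩
      · intro hsub
        have : a ∈ (T f).filter (fun w => w < b) := Finset.mem_filter.mpr ⟨haT, hab⟩
        have := hsub this
        simp only [Finset.mem_filter] at this
        omega
    have hrkbd : ∀ f a, a ∈ T f → rk f a < n := by
      intro f a haT
      have h1 : rk f a < (T f).card := by
        apply Finset.card_lt_card
        constructor
        · exact Finset.filter_subset _ _
        · intro hsub
          have := hsub haT
          simp only [Finset.mem_filter] at this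
          omega
      have h2 : (T f).card ≤ n := le_trans Finset.card_image_le (by rw [Finset.card_univ])
      omega
    refine ltdim_le_of_bounded ht (L.image (fun f => c f)) ?_ ?_ ?_ ?_
    · intro g hg
      obtain ⟨f, hf, rfl⟩ := Finset.mem_image.mp hg
      intro u v huv a b hu hv
      simp only [hc, Option.map_eq_some_iff] at hu hv
      obtain ⟨a₀, ha₀, rfl⟩ := hu
      obtain ⟨b₀, hb₀, rfl⟩ := hv
      exact hrkmono f a₀ b₀ (hmono f hf huv ha₀ hb₀)
    · intro x y hxy
      obtain ⟨f, hf, a, b, hxa, hyb, hab⟩ := hsep x y hxy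
      refine ⟨c f, Finset.mem_image_of_mem _ hf, rk f a, rk f b, ?_, ?_,
        hrkstrict f a b (hmemT f x a hxa) hab⟩
      · simp [hc, hxa]
      · simp [hc, hyb]
    · intro g hg x v hv
      obtain ⟨f, hf, rfl⟩ := Finset.mem_image.mp hg
      simp only [hc, Option.map_eq_some_iff] at hv
      obtain ⟨a₀, ha₀, rfl⟩ := hv
      calc rk f a₀ < n := hrkbd f a₀ (hmemT f x a₀ ha₀)
        _ ≤ t ^ Nat.clog t n := Nat.le_pow_clog ht1 n
    · intro x
      calc ((L.image (fun f => c f)).filter fun g => (g x).isSome).card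
          ≤ (L.filter fun f => (f x).isSome).card := by
            apply Finset.card_le_card_of_surjOn (fun f => c f)
            intro g hg
            simp only [Finset.coe_filter, Set.mem_setOf_eq, Finset.mem_image] at hg
            obtain ⟨⟨f, hf, rfl⟩, hgx⟩ := hg
            refine ⟨f, ?_, rfl⟩
            simp only [Finset.coe_filter, Set.mem_setOf_eq]
            refine ⟨hf, ?_⟩
            simp only [hc] at hgx
            have h2 : (Option.map (rk f) (f x)).isSome = (f x).isSome := by
              cases f x <;> rfl
            rwa [h2] at hgx
        _ ≤ ldim P := hmult x
  · -- second inequality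
    obtain ⟨L, ⟨hmono, hsep⟩, hmult⟩ :
        ∃ L : Finset (P → Option (Fin s)), IsLocalRealiser L ∧ ∀ x, mult L x ≤ ltdim s P :=
      Nat.sInf_mem (exists_realiser_fin P hs)
    set ℓ := fun (f : P → Option (Fin s)) (x : P) => (f x).map Fin.val with hℓ
    refine ltdim_le_of_bounded ht (L.image (fun f => ℓ f)) ?_ ?_ ?_ ?_
    · intro g hg
      obtain ⟨f, hf, rfl⟩ := Finset.mem_image.mp hg
      intro u v huv a b hu hv
      simp only [hℓ, Option.map_eq_some_iff] at hu hv
      obtain ⟨a₀, ha₀, rfl⟩ := hu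
      obtain ⟨b₀, hb₀, rfl⟩ := hv
      exact hmono f hf huv ha₀ hb₀
    · intro x y hxy
      obtain ⟨f, hf, a, b, hxa, hyb, hab⟩ := hsep x y hxy
      refine ⟨ℓ f, Finset.mem_image_of_mem _ hf, a.val, b.val, ?_, ?_, hab⟩
      · simp [hℓ, hxa]
      · simp [hℓ, hyb]
    · intro g hg x v hv
      obtain ⟨f, hf, rfl⟩ := Finset.mem_image.mp hg
      simp only [hℓ, Option.map_eq_some_iff] at hv
      obtain ⟨a₀, ha₀, rfl⟩ := hv
      calc (a₀ : ℕ) < s := a₀.isLt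
        _ ≤ t ^ Nat.clog t s := Nat.le_pow_clog ht1 s
    · intro x
      calc ((L.image (fun f => ℓ f)).filter fun g => (g x).isSome).card
          ≤ (L.filter fun f => (f x).isSome).card := by
            apply Finset.card_le_card_of_surjOn (fun f => ℓ f)
            intro g hg
            simp only [Finset.coe_filter, Set.mem_setOf_eq, Finset.mem_image] at hg
            obtain ⟨⟨f, hf, rfl⟩, hgx⟩ := hg
            refine ⟨f, ?_, rfl⟩
            simp only [Finset.coe_filter, Set.mem_setOf_eq]
            refine ⟨hf, ?_⟩
            simp only [hℓ] at hgx
            have h2 : (Option.map (Fin.val) (f x)).isSome = (f x).isSome := by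
              cases f x <;> rfl
            rwa [h2] at hgx
        _ ≤ ltdim s P := hmult x
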